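/- There is a 2-player, 2-action, 1-state Markov game with horizon 2 and a non-Markov policy σ₂ for player 2 such that every Markov policy σ₁ of player 1 achieves value V₁^{σ₁×σ₂} = 1/2, while the best general (history-dependent) policy for player 1 achieves value max_{σ₁ ∈ Π₁^general} V₁^{σ₁×σ₂} = 3/4. -/
import Mathlib


/- The 2-player, 2-action, single-state Markov game with horizon 2 from
Proposition `nonmarkov-deviation`: actions are `Bool` (action "1" ↔ `true`).
Player 1's step-1 reward is `(1/2)·1[a₂ = 1]` and step-2 reward is
`(1/2)·1[a₁ = a₂]`.  Player 2 plays a uniformly random action at step 1 and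
repeats the same action at step 2 (a non-Markov policy).

`V1Gen f1 f2` is player 1's expected total reward when player 1 plays a general
(history-dependent) policy: `f1` is the step-1 action distribution, and
`f2 a₁ r` is the step-2 action distribution given player 1's step-1 action `a₁`
and observed step-1 reward `r` (which reveals player 2's step-1 action). -/
noncomputable def V1Gen (f1 : Bool → ℝ) (f2 : Bool → ℝ → Bool → ℝ) : ℝ :=
  ∑ b : Bool, (1 / 2 : ℝ) *
    ((1 / 2) * (if b then 1 else 0) +
      ∑ a1 : Bool, f1 a1 *
        ∑ a1' : Bool,
          f2 a1 ((1 / 2) * (if b then 1 else 0)) a1' *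
            ((1 / 2) * (if a1' = b then 1 else 0)))

/-- Player 1's value when playing a Markov policy: step-2 distribution `m2` cannot
depend on the history. -/
noncomputable def V1Markov (m1 m2 : Bool → ℝ) : ℝ :=
  V1Gen m1 (fun _ _ => m2)

/-- There is a 2-player, 2-action, 1-state Markov game with horizon 2 and a non-Markov
policy `σ₂` for player 2 (hard-coded in `V1Gen`) such that every Markov policy of
player 1 achieves value exactly `1/2`, while the best general (history-dependent)
policy for player 1 achieves value `3/4`. -/
theorem markov_vs_nonmarkov_deviation :
    (∀ m1 m2 : Bool → ℝ,
        (∀ a, 0 ≤ m1 a) → (∑ a, m1 a = 1) → (∀ a, 0 ≤ m2 a) → (∑ a, m2 a = 1) →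
        V1Markov m1 m2 = 1 / 2)
    ∧ (∃ f1 : Bool → ℝ, ∃ f2 : Bool → ℝ → Bool → ℝ,
        (∀ a, 0 ≤ f1 a) ∧ (∑ a, f1 a = 1) ∧
        (∀ a r, (∀ a', 0 ≤ f2 a r a') ∧ (∑ a', f2 a r a' = 1)) ∧
        V1Gen f1 f2 = 3 / 4)
    ∧ (∀ (f1 : Bool → ℝ) (f2 : Bool → ℝ → Bool → ℝ),
        (∀ a, 0 ≤ f1 a) → (∑ a, f1 a = 1) →
        (∀ a r, (∀ a', 0 ≤ f2 a r a') ∧ (∑ a', f2 a r a' = 1)) →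
        V1Gen f1 f2 ≤ 3 / 4) := by
  refine ⟨?_, ?_, ?_⟩
  · intro m1 m2 h1 hs1 h2 hs2
    simp only [Fintype.sum_bool] at hs1 hs2
    simp [V1Markov, V1Gen, Fintype.sum_bool]
    nlinarith [h1 true, h1 false, h2 true, h2 false]
  · refine ⟨fun _ => 1/2, fun _ r a' => if r = 0 then (if a' then 0 else 1) else (if a' then 1 else 0), ?_, ?_, ?_, ?_⟩
    · intro a; norm_num
    · simp [Fintype.sum_bool]
    · intro a r
      constructor
      · intro a'; dsimp only; split <;> split <;> norm_num
      · dsimp only; simp only [Fintype.sum_bool]; split <;> norm_num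
    · simp [V1Gen, Fintype.sum_bool]
      norm_num
  · intro f1 f2 h1 hs1 h2
    simp only [Fintype.sum_bool] at hs1
    obtain ⟨ht0, ht0s⟩ := h2 true 0
    obtain ⟨hf0, hf0s⟩ := h2 false 0
    obtain ⟨ht1, ht1s⟩ := h2 true (1/2)
    obtain ⟨hf1, hf1s⟩ := h2 false (1/2)
    simp only [Fintype.sum_bool] at ht0s hf0s ht1s hf1s
    simp [V1Gen, Fintype.sum_bool]
    nlinarith [h1 true, h1 false, ht0 true, ht0 false, hf0 true, hf0 false, ht1 true, ht1 false, hf1 true, hf1 false,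
      mul_nonneg (h1 true) (ht0 false), mul_nonneg (h1 false) (hf0 false),
      mul_nonneg (h1 true) (ht1 true), mul_nonneg (h1 false) (hf1 true),
      mul_nonneg (h1 true) (ht0 true), mul_nonneg (h1 false) (hf0 true),
      mul_nonneg (h1 true) (ht1 false), mul_nonneg (h1 false) (hf1 false)]
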